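/- Let −1 ≤ B < A ≤ 1 with B ≠ 0, and suppose f(z) = z + ∑_{n=2}^∞ aₙ zⁿ satisfies the Janowski coefficient bounds |aₙ| ≤ ∏_{k=0}^{n−2} |(B−A)+Bk|/(k+1) for n ≥ 2, with d(0, ∂f(𝔻)) ≥ (1−B)^{(A−B)/B}. Let Φ : [0,1] → [0,∞) be continuous increasing and ω : 𝔻 → 𝔻 with |ω(z)| ≤ |z|. Then |ω(z)| + ∑_{n=2}^∞ |aₙ||ω(z)|ⁿ + Φ(|ω(z)|) ∑_{n=2}^∞ |aₙ|²|ω(z)|^{2n} ≤ d(0, ∂f(𝔻)) for all |z| = r ≤ R, where R is a root in (0,1) of r + ∑_{n=2}^∞ (∏_{k=0}^{n−2}|(B−A)+Bk|/(k+1)) rⁿ + Φ(r) ∑_{n=2}^∞ (∏_{k=0}^{n−2}|(B−A)+Bk|/(k+1))² r^{2n} = (1−B)^{(A−B)/B}. -/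

import Mathlib

open Set Metric
open scoped BigOperators

private lemma sumPoly (r : ℝ) (hr0 : 0 < r) (hr1 : r < 1) (p : ℕ) :
    Summable (fun n : ℕ => ((n : ℝ) + 2) ^ p * r ^ n) := by
  have h : Summable (fun n : ℕ => (n : ℝ) ^ p * r ^ n) :=
    summable_pow_mul_geometric_of_norm_lt_one p
      (by rwa [Real.norm_eq_abs, abs_of_pos hr0])
  have h2 : Summable (fun n : ℕ => ((n + 2 : ℕ) : ℝ) ^ p * r ^ (n + 2)) :=
    h.comp_injective (add_left_injective 2)
  have h3 := h2.mul_right (r ^ 2)⁻¹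
  refine h3.congr fun n => ?_
  have : r ^ (n + 2) = r ^ n * r ^ 2 := by ring
  push_cast
  rw [this]
  field_simp

private lemma tele (m : ℕ) :
    ∏ k ∈ Finset.range m, ((k : ℝ) + 2) / ((k : ℝ) + 1) = (m : ℝ) + 1 := by
  induction m with
  | zero => simp
  | succ m ih =>
      rw [Finset.prod_range_succ, ih]
      have : ((m : ℝ) + 1) ≠ 0 := by positivity
      field_simp
      push_cast
      ring

theorem stmt9 (A B : ℝ) (hB1 : -1 ≤ B) (hBA : B < A) (hA1 : A ≤ 1) (hB0 : B ≠ 0)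
    (f : ℂ → ℂ) (a : ℕ → ℂ)
    (hf : AnalyticOn ℂ f (ball 0 1))
    (hrep : ∀ z ∈ ball (0:ℂ) 1, f z = z + ∑' n : ℕ, a (n + 2) * z ^ (n + 2))
    (ha : ∀ n, 2 ≤ n →
      ‖a n‖ ≤ ∏ k ∈ Finset.range (n - 1), |(B - A) + B * k| / (k + 1))
    (hd : (1 - B) ^ ((A - B) / B) ≤ infDist 0 (frontier (f '' ball 0 1)))
    (Φ : ℝ → ℝ) (hΦc : ContinuousOn Φ (Icc 0 1))
    (hΦm : MonotoneOn Φ (Icc 0 1)) (hΦ0 : ∀ x ∈ Icc (0:ℝ) 1, 0 ≤ Φ x)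
    (ω : ℂ → ℂ) (hωmap : ∀ z ∈ ball (0:ℂ) 1, ω z ∈ ball (0:ℂ) 1)
    (hω : ∀ z ∈ ball (0:ℂ) 1, ‖ω z‖ ≤ ‖z‖)
    (R : ℝ) (hR : R ∈ Ioo (0:ℝ) 1)
    (hroot : R + (∑' n : ℕ,
          (∏ k ∈ Finset.range (n + 1), |(B - A) + B * k| / (k + 1)) * R ^ (n + 2))
        + Φ R * (∑' n : ℕ,
          (∏ k ∈ Finset.range (n + 1), |(B - A) + B * k| / (k + 1)) ^ 2 * R ^ (2 * (n + 2)))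
        = (1 - B) ^ ((A - B) / B)) :
    ∀ z : ℂ, ‖z‖ ≤ R →
      ‖ω z‖ + (∑' n : ℕ, ‖a (n + 2)‖ * ‖ω z‖ ^ (n + 2))
        + Φ ‖ω z‖ * (∑' n : ℕ, ‖a (n + 2)‖ ^ 2 * ‖ω z‖ ^ (2 * (n + 2)))
      ≤ infDist 0 (frontier (f '' ball 0 1)) := by
  intro z hz
  obtain ⟨hR0, hR1⟩ := hR
  set c : ℕ → ℝ := fun n => ∏ k ∈ Finset.range (n + 1), |(B - A) + B * k| / (k + 1) with hc
  have hzball : z ∈ ball (0 : ℂ) 1 := by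
    simp only [mem_ball, dist_zero_right]
    calc ‖z‖ ≤ R := hz
    _ < 1 := hR1
  set u := ‖ω z‖ with hu_def
  have hu0 : (0 : ℝ) ≤ u := norm_nonneg _
  have hu : u ≤ R := (hω z hzball).trans hz
  have hu1 : u ≤ 1 := hu.trans hR1.le
  -- c is nonneg and bounded by n+2
  have hc0 : ∀ n, 0 ≤ c n := by
    intro n
    apply Finset.prod_nonneg
    intro k _
    positivity
  have hcb : ∀ n : ℕ, c n ≤ (n : ℝ) + 2 := by
    intro n
    have : c n ≤ ∏ k ∈ Finset.range (n + 1), ((k : ℝ) + 2) / ((k : ℝ) + 1) := by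
      apply Finset.prod_le_prod
      · intro k _; positivity
      · intro k _
        apply div_le_div_of_nonneg_right _ (by positivity)
        · calc |(B - A) + B * k| ≤ |B - A| + |B * k| := abs_add_le _ _
            _ ≤ 2 + (k : ℝ) := by
              have h1 : |B - A| ≤ 2 := by rw [abs_le]; constructor <;> linarith
              have h2 : |B| ≤ 1 := by rw [abs_le]; constructor <;> linarith
              have : |B * (k : ℝ)| = |B| * (k : ℝ) := by
                rw [abs_mul, abs_of_nonneg (by positivity : (0:ℝ) ≤ (k:ℝ))]
              nlinarith [Nat.cast_nonneg (α := ℝ) k]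
            _ = (k : ℝ) + 2 := by ring
    calc c n ≤ ∏ k ∈ Finset.range (n + 1), ((k : ℝ) + 2) / ((k : ℝ) + 1) := this
      _ = (n : ℝ) + 2 := by rw [tele]; push_cast; ring
  have hab : ∀ n : ℕ, ‖a (n + 2)‖ ≤ c n := by
    intro n
    exact ha (n + 2) (by omega)
  -- termwise bounds
  have t1 : ∀ n : ℕ, ‖a (n + 2)‖ * u ^ (n + 2) ≤ c n * R ^ (n + 2) := by
    intro n
    exact mul_le_mul (hab n) (pow_le_pow_left₀ hu0 hu _) (by positivity) (hc0 n)
  have t1' : ∀ n : ℕ, c n * R ^ (n + 2) ≤ ((n : ℝ) + 2) * R ^ n := by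
    intro n
    exact mul_le_mul (hcb n) (pow_le_pow_of_le_one hR0.le hR1.le (by omega))
      (by positivity) (by positivity)
  have t2 : ∀ n : ℕ, ‖a (n + 2)‖ ^ 2 * u ^ (2 * (n + 2)) ≤ c n ^ 2 * R ^ (2 * (n + 2)) := by
    intro n
    have e1 : u ^ (2 * (n + 2)) ≤ R ^ (2 * (n + 2)) := pow_le_pow_left₀ hu0 hu _
    have e2 : ‖a (n + 2)‖ ^ 2 ≤ c n ^ 2 := pow_le_pow_left₀ (norm_nonneg _) (hab n) 2
    exact mul_le_mul e2 e1 (by positivity) (by positivity)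
  have t2' : ∀ n : ℕ, c n ^ 2 * R ^ (2 * (n + 2)) ≤ ((n : ℝ) + 2) ^ 2 * (R ^ 2) ^ n := by
    intro n
    have e1 : c n * R ^ (n + 2) ≤ ((n : ℝ) + 2) * R ^ n := t1' n
    have := pow_le_pow_left₀ (by positivity) e1 2
    calc c n ^ 2 * R ^ (2 * (n + 2)) = (c n * R ^ (n + 2)) ^ 2 := by
          rw [mul_pow, ← pow_mul]; ring_nf
      _ ≤ (((n : ℝ) + 2) * R ^ n) ^ 2 := this
      _ = ((n : ℝ) + 2) ^ 2 * (R ^ 2) ^ n := by rw [mul_pow, ← pow_mul, ← pow_mul, mul_comm n 2]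
  -- summability
  have SR1 : Summable (fun n : ℕ => c n * R ^ (n + 2)) := by
    apply Summable.of_nonneg_of_le (fun n => by positivity) t1'
    simpa using sumPoly R hR0 hR1 1
  have Su1 : Summable (fun n : ℕ => ‖a (n + 2)‖ * u ^ (n + 2)) :=
    Summable.of_nonneg_of_le (fun n => by positivity) t1 SR1
  have SR2 : Summable (fun n : ℕ => c n ^ 2 * R ^ (2 * (n + 2))) := by
    apply Summable.of_nonneg_of_le (fun n => by positivity) t2'
    exact sumPoly (R ^ 2) (by positivity) (by nlinarith) 2
  have Su2 : Summable (fun n : ℕ => ‖a (n + 2)‖ ^ 2 * u ^ (2 * (n + 2))) :=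
    Summable.of_nonneg_of_le (fun n => by positivity) t2 SR2
  -- tsum bounds
  have h2 : (∑' n : ℕ, ‖a (n + 2)‖ * u ^ (n + 2)) ≤ ∑' n : ℕ, c n * R ^ (n + 2) :=
    Summable.tsum_le_tsum t1 Su1 SR1
  have h3 : (∑' n : ℕ, ‖a (n + 2)‖ ^ 2 * u ^ (2 * (n + 2)))
      ≤ ∑' n : ℕ, c n ^ 2 * R ^ (2 * (n + 2)) := Summable.tsum_le_tsum t2 Su2 SR2
  have hΦuR : Φ u ≤ Φ R := hΦm ⟨hu0, hu1⟩ ⟨hR0.le, hR1.le⟩ hu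
  have hΦu0 : 0 ≤ Φ u := hΦ0 u ⟨hu0, hu1⟩
  have h4 : Φ u * (∑' n : ℕ, ‖a (n + 2)‖ ^ 2 * u ^ (2 * (n + 2)))
      ≤ Φ R * (∑' n : ℕ, c n ^ 2 * R ^ (2 * (n + 2))) :=
    mul_le_mul hΦuR h3 (tsum_nonneg fun n => by positivity) (hΦ0 R ⟨hR0.le, hR1.le⟩)
  calc u + (∑' n : ℕ, ‖a (n + 2)‖ * u ^ (n + 2))
        + Φ u * (∑' n : ℕ, ‖a (n + 2)‖ ^ 2 * u ^ (2 * (n + 2)))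
      ≤ R + (∑' n : ℕ, c n * R ^ (n + 2))
        + Φ R * (∑' n : ℕ, c n ^ 2 * R ^ (2 * (n + 2))) := by
        gcongr <;> first | exact hu | exact h2 | exact h4
    _ = (1 - B) ^ ((A - B) / B) := hroot
    _ ≤ infDist 0 (frontier (f '' ball 0 1)) := hd
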